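/- Let Φ be the standard normal cdf. Given μ > 0, σ > 0, t > 0, r ∈ ℝ, δ ∈ (0, 1/2), set z = Φ⁻¹(δ) < 0, ν = σ√t, k⁺ = μ·e^{−zν + ν²/2 + rt}, k⁻ = μ·e^{zν + ν²/2 + rt}, and let c_μ(k⁺) = μ·Φ(d₁(k⁺)) − k⁺·e^{−rt}·Φ(d₂(k⁺)) and p_μ(k⁻) = k⁻·e^{−rt}·Φ(−d₂(k⁻)) − μ·(1 − Φ(d₁(k⁻))) be the Black–Scholes call and put prices. Then the relative value (c_μ(k⁺) + p_μ(k⁻)) / ((k⁺ − k⁻)·e^{−rt}) equals (e^{zν}·Φ(z+ν) − e^{−zν}·Φ(z−ν)) / (e^{−zν} − e^{zν}); in particular it is independent of the current price μ and the risk-free rate r, and depends on σ and t only through ν = σ√t. -/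

import Mathlib

open MeasureTheory Real

/-- The standard normal density φ(u) = exp(-u²/2)/√(2π). -/
noncomputable def stdNormalPdf (u : ℝ) : ℝ := Real.exp (-u ^ 2 / 2) / Real.sqrt (2 * Real.pi)

/-- The standard normal cdf Φ(z) = ∫_{-∞}^z φ(u) du. -/
noncomputable def stdNormalCdf (z : ℝ) : ℝ := ∫ u in Set.Iic z, stdNormalPdf u

/-- Black–Scholes d₁(k) = (log(μ/k) + (r + σ²/2)t)/(σ√t). -/
noncomputable def d1 (μ σ t r k : ℝ) : ℝ :=
  (Real.log (μ / k) + (r + σ ^ 2 / 2) * t) / (σ * Real.sqrt t)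

/-- Black–Scholes d₂(k) = d₁(k) − σ√t. -/
noncomputable def d2 (μ σ t r k : ℝ) : ℝ := d1 μ σ t r k - σ * Real.sqrt t

/-- Black–Scholes call price c_μ(k) = μ·Φ(d₁(k)) − k·e^{−rt}·Φ(d₂(k)). -/
noncomputable def callPrice (μ σ t r k : ℝ) : ℝ :=
  μ * stdNormalCdf (d1 μ σ t r k) - k * Real.exp (-(r * t)) * stdNormalCdf (d2 μ σ t r k)

/-- Black–Scholes put price p_μ(k) = k·e^{−rt}·Φ(−d₂(k)) − μ·(1 − Φ(d₁(k))). -/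
noncomputable def putPrice (μ σ t r k : ℝ) : ℝ :=
  k * Real.exp (-(r * t)) * stdNormalCdf (-(d2 μ σ t r k)) -
    μ * (1 - stdNormalCdf (d1 μ σ t r k))

lemma pdf_eq (u : ℝ) : stdNormalPdf u = Real.exp (-(1/2) * u ^ 2) * (Real.sqrt (2 * Real.pi))⁻¹ := by
  rw [stdNormalPdf, div_eq_mul_inv]; ring_nf

lemma integrable_pdf : Integrable stdNormalPdf := by
  rw [show stdNormalPdf = fun u => Real.exp (-(1/2) * u ^ 2) * (Real.sqrt (2 * Real.pi))⁻¹ from funext pdf_eq]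
  exact (integrable_exp_neg_mul_sq (by norm_num : (0:ℝ) < 1/2)).mul_const _

lemma total_pdf : ∫ u, stdNormalPdf u = 1 := by
  simp_rw [pdf_eq]
  rw [integral_mul_const, integral_gaussian]
  rw [show π / (1/2) = 2 * π by ring]
  exact mul_inv_cancel₀ (by positivity)

lemma cdf_symm (z : ℝ) : stdNormalCdf z + stdNormalCdf (-z) = 1 := by
  have h1 : stdNormalCdf (-z) = ∫ u in Set.Ioi z, stdNormalPdf u := by
    rw [stdNormalCdf, ← neg_neg z, ← integral_comp_neg_Iic, neg_neg]
    congr 1; ext u; rw [pdf_eq, pdf_eq, neg_pow]; ring_nf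
  rw [stdNormalCdf, h1,
    intervalIntegral.integral_Iic_add_Ioi integrable_pdf.integrableOn integrable_pdf.integrableOn, total_pdf]

/-- The relative value of the δ-symmetric strangle,
(c_μ(k⁺) + p_μ(k⁻))/((k⁺ − k⁻)·e^{−rt}) with k⁺ = μ·e^{−zν+ν²/2+rt} and
k⁻ = μ·e^{zν+ν²/2+rt}, equals
(e^{zν}Φ(z+ν) − e^{−zν}Φ(z−ν))/(e^{−zν} − e^{zν}); in particular it does not
depend on μ or r, and depends on σ, t only through ν = σ√t. -/
theorem strangle_relative_value_formula (μ σ t r δ z ν : ℝ)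
    (hμ : 0 < μ) (hσ : 0 < σ) (ht : 0 < t) (hδ : δ ∈ Set.Ioo (0 : ℝ) (1 / 2))
    (hz : stdNormalCdf z = δ) (hzneg : z < 0) (hν : ν = σ * Real.sqrt t) :
    (callPrice μ σ t r (μ * Real.exp (-z * ν + ν ^ 2 / 2 + r * t)) +
        putPrice μ σ t r (μ * Real.exp (z * ν + ν ^ 2 / 2 + r * t))) /
        ((μ * Real.exp (-z * ν + ν ^ 2 / 2 + r * t) -
            μ * Real.exp (z * ν + ν ^ 2 / 2 + r * t)) * Real.exp (-(r * t))) =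
      (Real.exp (z * ν) * stdNormalCdf (z + ν) -
          Real.exp (-z * ν) * stdNormalCdf (z - ν)) /
        (Real.exp (-z * ν) - Real.exp (z * ν)) := by
  have hν0 : 0 < ν := by rw [hν]; positivity
  have hνne : ν ≠ 0 := hν0.ne'
  have hσt : σ ^ 2 * t = ν ^ 2 := by
    rw [hν, mul_pow, Real.sq_sqrt ht.le]
  have hd1 : ∀ a : ℝ, d1 μ σ t r (μ * Real.exp (a * ν + ν ^ 2 / 2 + r * t)) = -a := by
    intro a
    rw [d1, ← hν]
    rw [Real.log_div hμ.ne' (by positivity), Real.log_mul hμ.ne' (Real.exp_ne_zero _),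
      Real.log_exp]
    rw [show Real.log μ - (Real.log μ + (a * ν + ν ^ 2 / 2 + r * t)) + (r + σ ^ 2 / 2) * t
        = -(a * ν) + (σ ^ 2 * t - ν ^ 2) / 2 by ring, hσt]
    field_simp
    ring
  have hd1p := hd1 (-z)
  have hd1m := hd1 z
  have hE : Real.exp (z * ν) < Real.exp (-z * ν) :=
    Real.exp_lt_exp.mpr (by nlinarith)
  have hEne : Real.exp (-z * ν) - Real.exp (z * ν) ≠ 0 := sub_ne_zero.mpr hE.ne'
  have hD : (μ * Real.exp (-z * ν + ν ^ 2 / 2 + r * t) -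
      μ * Real.exp (z * ν + ν ^ 2 / 2 + r * t)) * Real.exp (-(r * t)) ≠ 0 := by
    apply mul_ne_zero _ (Real.exp_ne_zero _)
    have : Real.exp (z * ν + ν ^ 2 / 2 + r * t) < Real.exp (-z * ν + ν ^ 2 / 2 + r * t) :=
      Real.exp_lt_exp.mpr (by nlinarith)
    exact sub_ne_zero.mpr (by nlinarith)
  have hsymm : stdNormalCdf (-z) = 1 - stdNormalCdf z := by
    have := cdf_symm z; linarith
  rw [callPrice, putPrice, d2, d2, ← hν, hd1p, hd1m, neg_neg, hsymm,
    show -(-z - ν) = z + ν by ring]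
  rw [div_eq_div_iff hD hEne]
  simp only [Real.exp_add, Real.exp_neg]
  field_simp
  ring
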